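/- In the search network together with the readout network for a finite directed graph G = (V, E) with source s and sink t: some readout neuron R_{(a,t)} coding an edge into the sink spikes (at some time) if and only if there exists a directed path from s to t in G. (Correctness of the neuromorphic search for an augmenting path: applied to the subgraph of non-exhausted edges, a sink readout neuron fires iff an augmenting path exists.) -/

import Mathlib

/-- A neuron with initial potential `N+1`, threshold `N+2`, leak 1 and reset 0,
receiving nonnegative input `I τ`, eventually spikes if it ever receives input `≥ 1`. -/
private lemma spike_of_input {N : ℤ} (W I : ℕ → ℤ)
    (hW0 : W 0 = N + 1)
    (hEvol : ∀ τ, W (τ + 1) = max 0 ((if N + 2 ≤ W τ then (0 : ℤ) else W τ) + I τ))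
    (hI : ∀ τ, 0 ≤ I τ) (τ0 : ℕ) (hτ0 : 1 ≤ I τ0) :
    ∃ τ, N + 2 ≤ W τ := by
  by_contra h
  push_neg at h
  have hmono : ∀ τ, N + 1 ≤ W τ := by
    intro τ
    induction τ with
    | zero => omega
    | succ τ ih =>
      rw [hEvol τ, if_neg (by have := h τ; omega)]
      have := hI τ
      have : N + 1 ≤ W τ + I τ := by omega
      exact le_max_of_le_right this
  have h1 := hEvol τ0
  rw [if_neg (by have := h τ0; omega)] at h1
  have h2 : N + 2 ≤ W (τ0 + 1) := by
    rw [h1]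
    exact le_max_of_le_right (by have := hmono τ0; omega)
  exact absurd h2 (not_le.mpr (h (τ0 + 1)))

/-- `reachIn E n a b` holds iff there is a directed path with exactly `n` edges
from `a` to `b` using edges in `E`. -/
def reachIn {V : Type*} (E : Finset (V × V)) : ℕ → V → V → Prop
  | 0, a, b => a = b
  | n + 1, a, b => ∃ c, (a, c) ∈ E ∧ reachIn E n c b

/-- In the search network together with the readout network for a finite
directed graph `G = (V, E)` with source `s` and sink `t`, some readout neuron
`R (a, t)` coding an edge into the sink spikes (at some time) iff there exists a
directed path from `s` to `t` in `G`. -/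
theorem search_readout_correctness
    {V : Type*} [DecidableEq V] (E : Finset (V × V)) (s t : V)
    (hst : s ≠ t) (hsIn : ∀ e ∈ E, e.2 ≠ s) (htOut : ∀ e ∈ E, e.1 ≠ t)
    (VTr : ℕ → ℤ) (VH VR : V × V → ℕ → ℤ)
    (hTr0 : VTr 0 = 1)
    (hTrEvol : ∀ τ, VTr (τ + 1) =
      max 0 ((1 : ℤ) * (if (1 : ℤ) ≤ VTr τ then (0 : ℤ) else VTr τ)))
    (hH0 : ∀ e ∈ E, VH e 0 = (E.card : ℤ) + 1)
    (hHEvol : ∀ e ∈ E, ∀ τ, VH e (τ + 1) =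
      max 0 ((1 : ℤ) * (if (E.card : ℤ) + 2 ≤ VH e τ then (0 : ℤ) else VH e τ) +
        (∑ e' ∈ E.filter (fun e' => e'.1 = e.2),
          (if (E.card : ℤ) + 2 ≤ VH e' τ then (1 : ℤ) else 0)) +
        (if e.2 = t ∧ (1 : ℤ) ≤ VTr τ then (1 : ℤ) else 0)))
    (hR0 : ∀ e ∈ E, VR e 0 = (E.card : ℤ) + 1)
    (hREvol : ∀ e ∈ E, ∀ τ, VR e (τ + 1) =
      max 0 ((1 : ℤ) * (if (E.card : ℤ) + 2 ≤ VR e τ then (0 : ℤ) else VR e τ) +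
        (if e.1 = s ∧ (E.card : ℤ) + 2 ≤ VH e τ then (1 : ℤ) else 0) +
        (∑ e' ∈ E.filter (fun e' => e'.2 = e.1),
          (if (E.card : ℤ) + 2 ≤ VR e' τ then (1 : ℤ) else 0)))) :
    (∃ e ∈ E, e.2 = t ∧ ∃ τ, (E.card : ℤ) + 2 ≤ VR e τ) ↔
      ∃ n, reachIn E n s t := by
  set N : ℤ := (E.card : ℤ) with hN
  -- Rewritten evolution equations in the form expected by `spike_of_input`.
  have hHEvol' : ∀ e ∈ E, ∀ τ, VH e (τ + 1) =
      max 0 ((if N + 2 ≤ VH e τ then (0 : ℤ) else VH e τ) +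
        ((∑ e' ∈ E.filter (fun e' => e'.1 = e.2),
          (if N + 2 ≤ VH e' τ then (1 : ℤ) else 0)) +
         (if e.2 = t ∧ (1 : ℤ) ≤ VTr τ then (1 : ℤ) else 0))) := by
    intro e he τ
    rw [hHEvol e he τ]; ring_nf
  have hREvol' : ∀ e ∈ E, ∀ τ, VR e (τ + 1) =
      max 0 ((if N + 2 ≤ VR e τ then (0 : ℤ) else VR e τ) +
        ((if e.1 = s ∧ N + 2 ≤ VH e τ then (1 : ℤ) else 0) +
         (∑ e' ∈ E.filter (fun e' => e'.2 = e.1),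
          (if N + 2 ≤ VR e' τ then (1 : ℤ) else 0)))) := by
    intro e he τ
    rw [hREvol e he τ]; ring_nf
  -- nonnegativity of inputs
  have hsum_nonneg : ∀ (S : Finset (V × V)) (f : V × V → Prop) [DecidablePred f],
      (0 : ℤ) ≤ ∑ e' ∈ S, (if f e' then (1 : ℤ) else 0) := by
    intro S f _
    exact Finset.sum_nonneg (fun i _ => by split <;> norm_num)
  -- Soundness: any spike at any time implies reachability.
  have sound : ∀ τ, (∀ e ∈ E, N + 2 ≤ VH e τ → ∃ n, reachIn E n e.2 t) ∧
      (∀ e ∈ E, N + 2 ≤ VR e τ → ∃ n, reachIn E n s t) := by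
    intro τ
    induction τ with
    | zero =>
      constructor
      · intro e he h; rw [hH0 e he] at h; omega
      · intro e he h; rw [hR0 e he] at h; omega
    | succ τ ih =>
      obtain ⟨ihH, ihR⟩ := ih
      have hNpos : (0 : ℤ) < N + 2 := by positivity
      constructor
      · intro e he h
        by_cases hsp : N + 2 ≤ VH e τ
        · exact ihH e he hsp
        by_cases ht : e.2 = t
        · exact ⟨0, ht⟩
        rw [hHEvol' e he τ, if_neg hsp, if_neg (by tauto)] at h
        have h2 : N + 2 ≤ VH e τ +
            ((∑ e' ∈ E.filter (fun e' => e'.1 = e.2),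
              (if N + 2 ≤ VH e' τ then (1 : ℤ) else 0)) + 0) := by
          rcases le_max_iff.mp h with h | h
          · omega
          · exact h
        have hsum : (∑ e' ∈ E.filter (fun e' => e'.1 = e.2),
            (if N + 2 ≤ VH e' τ then (1 : ℤ) else 0)) ≠ 0 := by
          intro hz; rw [hz] at h2; omega
        obtain ⟨e', he', hne⟩ := Finset.exists_ne_zero_of_sum_ne_zero hsum
        rw [Finset.mem_filter] at he'
        have hcond : N + 2 ≤ VH e' τ := by
          by_contra hc; rw [if_neg hc] at hne; exact hne rfl
        obtain ⟨n, hn⟩ := ihH e' he'.1 hcond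
        refine ⟨n + 1, ⟨e'.2, ?_, hn⟩⟩
        have : (e.2, e'.2) = e' := by
          rw [← he'.2]
        rw [this]; exact he'.1
      · intro e he h
        by_cases hsp : N + 2 ≤ VR e τ
        · exact ihR e he hsp
        by_cases hH : e.1 = s ∧ N + 2 ≤ VH e τ
        · obtain ⟨n, hn⟩ := ihH e he hH.2
          refine ⟨n + 1, ⟨e.2, ?_, hn⟩⟩
          rw [← hH.1]; exact he
        rw [hREvol' e he τ, if_neg hsp, if_neg hH] at h
        have h2 : N + 2 ≤ VR e τ +
            (0 + (∑ e' ∈ E.filter (fun e' => e'.2 = e.1),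
              (if N + 2 ≤ VR e' τ then (1 : ℤ) else 0))) := by
          rcases le_max_iff.mp h with h | h
          · omega
          · exact h
        have hsum : (∑ e' ∈ E.filter (fun e' => e'.2 = e.1),
            (if N + 2 ≤ VR e' τ then (1 : ℤ) else 0)) ≠ 0 := by
          intro hz; rw [hz] at h2; omega
        obtain ⟨e', he', hne⟩ := Finset.exists_ne_zero_of_sum_ne_zero hsum
        rw [Finset.mem_filter] at he'
        have hcond : N + 2 ≤ VR e' τ := by
          by_contra hc; rw [if_neg hc] at hne; exact hne rfl
        exact ihR e' he'.1 hcond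
  -- Completeness for H: if the sink is reachable from the head of `e`, then `H e` spikes.
  have Hcomp : ∀ n, ∀ e ∈ E, reachIn E n e.2 t → ∃ τ, N + 2 ≤ VH e τ := by
    intro n
    induction n with
    | zero =>
      intro e he hr
      have ht : e.2 = t := hr
      refine spike_of_input (VH e) _ (hH0 e he) (hHEvol' e he) ?_ 0 ?_
      · intro τ
        exact add_nonneg (hsum_nonneg _ _) (by split <;> norm_num)
      · rw [if_pos ⟨ht, by rw [hTr0]⟩]
        have := hsum_nonneg (E.filter (fun e' => e'.1 = e.2))
          (fun e' => N + 2 ≤ VH e' 0)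
        omega
    | succ n ih =>
      intro e he hr
      obtain ⟨c, hc, hct⟩ := hr
      obtain ⟨σ, hσ⟩ := ih (e.2, c) hc hct
      refine spike_of_input (VH e) _ (hH0 e he) (hHEvol' e he) ?_ σ ?_
      · intro τ
        exact add_nonneg (hsum_nonneg _ _) (by split <;> norm_num)
      · have hmem : (e.2, c) ∈ E.filter (fun e' => e'.1 = e.2) := by
          rw [Finset.mem_filter]; exact ⟨hc, rfl⟩
        have hle : (1 : ℤ) ≤ ∑ e' ∈ E.filter (fun e' => e'.1 = e.2),
            (if N + 2 ≤ VH e' σ then (1 : ℤ) else 0) := by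
          have := Finset.single_le_sum
            (f := fun e' => if N + 2 ≤ VH e' σ then (1 : ℤ) else 0)
            (fun i _ => by split <;> norm_num) hmem
          simp only [if_pos hσ] at this
          exact this
        have : (0 : ℤ) ≤ if e.2 = t ∧ (1 : ℤ) ≤ VTr σ then (1 : ℤ) else 0 := by
          split <;> norm_num
        omega
  -- Completeness chain for R.
  have Rchain : ∀ n, ∀ a : V, reachIn E n a t →
      (a = s ∨ ∃ e' ∈ E, e'.2 = a ∧ ∃ τ, N + 2 ≤ VR e' τ) →
      ∃ e ∈ E, e.2 = t ∧ ∃ τ, N + 2 ≤ VR e τ := by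
    intro n
    induction n with
    | zero =>
      intro a hat hyp
      have ha : a = t := hat
      rcases hyp with rfl | ⟨e', he', he2, hsp⟩
      · exact absurd ha hst
      · exact ⟨e', he', by rw [he2, ha], hsp⟩
    | succ n ih =>
      intro a hat hyp
      obtain ⟨c, hac, hct⟩ := hat
      have hspike : ∃ τ, N + 2 ≤ VR (a, c) τ := by
        rcases hyp with rfl | ⟨e', he', he2, τ', hsp'⟩
        · obtain ⟨σ, hσ⟩ := Hcomp n (a, c) hac hct
          refine spike_of_input (VR (a, c)) _ (hR0 _ hac) (hREvol' _ hac) ?_ σ ?_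
          · intro τ
            exact add_nonneg (by split <;> norm_num) (hsum_nonneg _ _)
          · rw [if_pos ⟨rfl, hσ⟩]
            have := hsum_nonneg (E.filter (fun e' => e'.2 = (a, c).1))
              (fun e' => N + 2 ≤ VR e' σ)
            omega
        · refine spike_of_input (VR (a, c)) _ (hR0 _ hac) (hREvol' _ hac) ?_ τ' ?_
          · intro τ
            exact add_nonneg (by split <;> norm_num) (hsum_nonneg _ _)
          · have hmem : e' ∈ E.filter (fun x => x.2 = (a, c).1) := by
              rw [Finset.mem_filter]; exact ⟨he', he2⟩
            have hle : (1 : ℤ) ≤ ∑ x ∈ E.filter (fun x => x.2 = (a, c).1),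
                (if N + 2 ≤ VR x τ' then (1 : ℤ) else 0) := by
              have := Finset.single_le_sum
                (f := fun x => if N + 2 ≤ VR x τ' then (1 : ℤ) else 0)
                (fun i _ => by split <;> norm_num) hmem
              simp only [if_pos hsp'] at this
              exact this
            have : (0 : ℤ) ≤ if (a, c).1 = s ∧ N + 2 ≤ VH (a, c) τ' then (1 : ℤ) else 0 := by
              split <;> norm_num
            omega
      exact ih c hct (Or.inr ⟨(a, c), hac, rfl, hspike⟩)
  constructor
  · rintro ⟨e, he, -, τ, hτ⟩
    exact (sound τ).2 e he hτ
  · rintro ⟨n, hn⟩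
    exact Rchain n s hn (Or.inl rfl)
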